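/- For every z ∈ ℂ^n with f_{i,j,k}(z) ≠ 0 for all triples of distinct indices, and every i: K_i(z) v_{j,k} = (d_{j,k}/f_{i,j,k}(z)) (a_i v_{j,k} + a_j v_{k,i} + a_k v_{i,j}) whenever i ∉ {j,k}, and K_i(z) v_{j,i} = −Σ_{k ∉ {i,j}} K_i(z) v_{j,k}. -/

import Mathlib

open Finset

/-- `d_{i,j} = b_i^1 b_j^2 − b_i^2 b_j^1`. -/
def dd2 {n : ℕ} (b : Fin n → Fin 2 → ℂ) (i j : Fin n) : ℂ :=
  b i 0 * b j 1 - b i 1 * b j 0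

/-- `f_{i,j,k}(z) = d_{j,k} z_i + d_{k,i} z_j + d_{i,j} z_k`. -/
def ff2 {n : ℕ} (b : Fin n → Fin 2 → ℂ) (z : Fin n → ℂ) (i j k : Fin n) : ℂ :=
  dd2 b j k * z i + dd2 b k i * z j + dd2 b i j * z k

/-- The basis vector `F_{i,j}` of `V` in the coordinate model: an element of
`Fin n → Fin n → ℂ` whose `(i,j)` entry is `1` and `(j,i)` entry is `-1`.
This realizes the relations `F_{j,i} = -F_{i,j}` and `F_{i,i} = 0`. -/
def F2 (n : ℕ) (i j : Fin n) : Fin n → Fin n → ℂ :=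
  fun k l => (if k = i ∧ l = j then 1 else 0) - (if k = j ∧ l = i then 1 else 0)

/-- The space `V` spanned by the `F_{i,j}`: antisymmetric coefficient arrays. -/
noncomputable def skewV2 (n : ℕ) : Submodule ℂ (Fin n → Fin n → ℂ) where
  carrier := {x | ∀ i j, x j i = -x i j}
  add_mem' := by
    intro x y hx hy i j
    simp only [Pi.add_apply, hx i j, hy i j]
    ring
  zero_mem' := by
    intro i j
    simp
  smul_mem' := by
    intro c x hx i j
    simp only [Pi.smul_apply, smul_eq_mul, hx i j]
    ring

/-- The subspace `Sing V ⊆ V` of singular vectors: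
`{∑_{i<j} c_{i,j} F_{i,j} : ∑_{j<i} a_j c_{j,i} − ∑_{j>i} a_j c_{i,j} = 0 for every i}`. -/
noncomputable def singV2 (n : ℕ) (a : Fin n → ℂ) : Submodule ℂ (Fin n → Fin n → ℂ) where
  carrier := {x | (∀ i j, x j i = -x i j) ∧ ∀ i,
    (∑ j ∈ Finset.univ.filter (fun j => j < i), a j * x j i) -
      (∑ j ∈ Finset.univ.filter (fun j => i < j), a j * x i j) = 0}
  add_mem' := by
    intro x y hx hy
    refine ⟨fun i j => ?_, fun i => ?_⟩
    · simp only [Pi.add_apply, hx.1 i j, hy.1 i j]; ring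
    · have h1 := hx.2 i
      have h2 := hy.2 i
      simp only [Pi.add_apply, mul_add, Finset.sum_add_distrib]
      linear_combination h1 + h2
  zero_mem' := by
    constructor
    · intro i j; simp
    · intro i; simp
  smul_mem' := by
    intro c x hx
    refine ⟨fun i j => ?_, fun i => ?_⟩
    · simp only [Pi.smul_apply, smul_eq_mul, hx.1 i j]; ring
    · have h := hx.2 i
      simp only [Pi.smul_apply, smul_eq_mul]
      have e1 : ∑ j ∈ Finset.univ.filter (fun j => j < i), a j * (c * x j i) =
          c * ∑ j ∈ Finset.univ.filter (fun j => j < i), a j * x j i := by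
        rw [Finset.mul_sum]; exact Finset.sum_congr rfl fun j _ => by ring
      have e2 : ∑ j ∈ Finset.univ.filter (fun j => i < j), a j * (c * x i j) =
          c * ∑ j ∈ Finset.univ.filter (fun j => i < j), a j * x i j := by
        rw [Finset.mul_sum]; exact Finset.sum_congr rfl fun j _ => by ring
      rw [e1, e2]
      linear_combination c * h

/-- The vector `v_{i,j} = F_{i,j} − (a_j/|a|) ∑_k F_{i,k} − (a_i/|a|) ∑_ℓ F_{ℓ,j}`
(for `i ≠ j`), and `v_{i,i} = 0`. -/
noncomputable def vv2 {n : ℕ} (a : Fin n → ℂ) (i j : Fin n) : Fin n → Fin n → ℂ :=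
  if i = j then 0 else
    F2 n i j - (a j / ∑ m, a m) • (∑ k, F2 n i k) - (a i / ∑ m, a m) • (∑ l, F2 n l j)

/-- The contravariant form `S^{(a)}` with `S^{(a)}(F_{i,j}, F_{i,j}) = a_i a_j` for `i < j`
and distinct basis vectors orthogonal, written on coordinates. -/
noncomputable def S2 {n : ℕ} (a : Fin n → ℂ) (x y : Fin n → Fin n → ℂ) : ℂ :=
  ∑ i, ∑ j ∈ Finset.univ.filter (fun j => i < j), a i * a j * x i j * y i j

/-- The operator `L_{i,j,k}` sending each of `F_{i,j}, F_{j,k}, F_{k,i}` to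
`a_k F_{i,j} + a_i F_{j,k} + a_j F_{k,i}` and killing `F_{ℓ,m}` with `{ℓ,m} ⊄ {i,j,k}`. -/
noncomputable def L2 {n : ℕ} (a : Fin n → ℂ) (i j k : Fin n) :
    (Fin n → Fin n → ℂ) →ₗ[ℂ] (Fin n → Fin n → ℂ) where
  toFun x := (x i j + x j k + x k i) •
    (a k • F2 n i j + a i • F2 n j k + a j • F2 n k i)
  map_add' x y := by
    simp only [Pi.add_apply]
    rw [← add_smul]
    congr 1
    ring
  map_smul' c x := by
    simp only [Pi.smul_apply, smul_eq_mul, RingHom.id_apply]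
    rw [smul_smul]
    congr 1
    ring

/-- The operator `K_i(z) = ∑_{{j,k} ⊆ {1,…,n}∖{i}} (d_{j,k}/f_{i,j,k}(z)) L_{i,j,k}`,
the sum over unordered pairs `{j,k}` realized by `j < k`. -/
noncomputable def K2 {n : ℕ} (a : Fin n → ℂ) (b : Fin n → Fin 2 → ℂ) (z : Fin n → ℂ)
    (i : Fin n) : (Fin n → Fin n → ℂ) →ₗ[ℂ] (Fin n → Fin n → ℂ) :=
  ∑ j ∈ Finset.univ.erase i, ∑ k ∈ Finset.univ.filter (fun k => j < k ∧ k ≠ i),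
    (dd2 b j k / ff2 b z i j k) • L2 a i j k

variable {n : ℕ} (a : Fin n → ℂ)

lemma F2_swap (i j : Fin n) : F2 n j i = -F2 n i j := by
  funext p q; simp only [F2, Pi.neg_apply]; ring

lemma sumF2R (j : Fin n) (p q : Fin n) :
    (∑ k, F2 n j k) p q = (if p = j then 1 else 0) - (if q = j then 1 else 0) := by
  simp only [Finset.sum_apply, F2, Finset.sum_sub_distrib, ite_and]
  simp [Finset.sum_ite_eq, Finset.sum_ite_eq']

lemma sumF2L (j : Fin n) (p q : Fin n) :
    (∑ l, F2 n l j) p q = (if q = j then 1 else 0) - (if p = j then 1 else 0) := by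
  simp only [Finset.sum_apply, F2, Finset.sum_sub_distrib, ite_and]
  simp [Finset.sum_ite_eq, Finset.sum_ite_eq']

lemma vv2_apply {j k : Fin n} (hjk : j ≠ k) (p q : Fin n) :
    vv2 a j k p q = ((if p = j ∧ q = k then 1 else 0) - (if p = k ∧ q = j then 1 else 0))
      - (a k / ∑ m, a m) * ((if p = j then 1 else 0) - (if q = j then 1 else 0))
      - (a j / ∑ m, a m) * ((if q = k then 1 else 0) - (if p = k then 1 else 0)) := by
  simp only [vv2, if_neg hjk, Pi.sub_apply, Pi.smul_apply, smul_eq_mul, sumF2R, sumF2L, F2]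

lemma triple_sum {i j k j' k' : Fin n} (hij : i ≠ j) (hik : i ≠ k) (hjk : j ≠ k)
    :
    vv2 a j k i j' + vv2 a j k j' k' + vv2 a j k k' i =
      (if j' = j ∧ k' = k then 1 else 0) - (if j' = k ∧ k' = j then 1 else 0) := by
  rw [vv2_apply a hjk, vv2_apply a hjk, vv2_apply a hjk]
  simp only [hij, hik, if_neg, false_and, and_false, if_false]
  ring

lemma L2_apply (i j k : Fin n) (x : Fin n → Fin n → ℂ) :
    L2 a i j k x = (x i j + x j k + x k i) •
      (a k • F2 n i j + a i • F2 n j k + a j • F2 n k i) := rfl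

lemma L2_vv2 {i j k j' k' : Fin n} (hij : i ≠ j) (hik : i ≠ k) (hjk : j ≠ k) :
    L2 a i j' k' (vv2 a j k) =
      ((if j' = j ∧ k' = k then (1:ℂ) else 0) - (if j' = k ∧ k' = j then 1 else 0)) •
        (a k' • F2 n i j' + a i • F2 n j' k' + a j' • F2 n k' i) := by
  rw [L2_apply, triple_sum a hij hik hjk]

lemma vv2_ident {i j k : Fin n} (hA : (∑ m, a m) ≠ 0)
    (hij : i ≠ j) (hik : i ≠ k) (hjk : j ≠ k) :
    a i • vv2 a j k + a j • vv2 a k i + a k • vv2 a i j =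
      a k • F2 n i j + a i • F2 n j k + a j • F2 n k i := by
  rw [vv2, vv2, vv2, if_neg hjk, if_neg hik.symm, if_neg hij]
  have e1 : (∑ l, F2 n l k) = -(∑ l, F2 n k l) := by
    rw [← Finset.sum_neg_distrib]; exact Finset.sum_congr rfl fun l _ => F2_swap k l
  have e2 : (∑ l, F2 n l i) = -(∑ l, F2 n i l) := by
    rw [← Finset.sum_neg_distrib]; exact Finset.sum_congr rfl fun l _ => F2_swap i l
  have e3 : (∑ l, F2 n l j) = -(∑ l, F2 n j l) := by
    rw [← Finset.sum_neg_distrib]; exact Finset.sum_congr rfl fun l _ => F2_swap j l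
  rw [e1, e2, e3]
  module


lemma F2_diag (j : Fin n) : F2 n j j = 0 := by
  funext p q; simp [F2]

lemma double_sum_zero : (∑ k : Fin n, ∑ l : Fin n, F2 n l k) = 0 := by
  have h1 : (∑ k : Fin n, ∑ l : Fin n, F2 n l k) = ∑ k : Fin n, ∑ l : Fin n, F2 n k l :=
    Finset.sum_comm
  have h2 : (∑ k : Fin n, ∑ l : Fin n, F2 n k l) = -(∑ k : Fin n, ∑ l : Fin n, F2 n l k) := by
    rw [← Finset.sum_neg_distrib]
    refine Finset.sum_congr rfl fun k _ => ?_
    rw [← Finset.sum_neg_distrib]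
    exact Finset.sum_congr rfl fun l _ => F2_swap l k
  have h3 := h1.trans h2
  have h4 : (2:ℂ) • (∑ k : Fin n, ∑ l : Fin n, F2 n l k) = 0 := by
    rw [two_smul]
    exact add_eq_zero_iff_eq_neg.mpr h3
  rcases smul_eq_zero.mp h4 with h | h
  · exact absurd h two_ne_zero
  · exact h

lemma vv2_sum (hA : (∑ m, a m) ≠ 0) (j : Fin n) : (∑ k, vv2 a j k) = 0 := by
  have hjj : vv2 a j j = 0 := by simp [vv2]
  rw [← Finset.sum_erase Finset.univ hjj]
  have hrw : ∀ k ∈ Finset.univ.erase j, vv2 a j k =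
      F2 n j k - (a k / ∑ m, a m) • (∑ m, F2 n j m) - (a j / ∑ m, a m) • (∑ l, F2 n l k) := by
    intro k hk; rw [vv2, if_neg (Finset.ne_of_mem_erase hk).symm]
  rw [Finset.sum_congr rfl hrw, Finset.sum_sub_distrib, Finset.sum_sub_distrib]
  have h1 : ∑ k ∈ Finset.univ.erase j, F2 n j k = ∑ m, F2 n j m :=
    Finset.sum_erase Finset.univ (F2_diag j)
  have h2 : ∑ k ∈ Finset.univ.erase j, (a k / ∑ m, a m) • (∑ m, F2 n j m)
      = (((∑ m, a m) - a j) / ∑ m, a m) • (∑ m, F2 n j m) := by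
    rw [← Finset.sum_smul, ← Finset.sum_div, Finset.sum_erase_eq_sub (Finset.mem_univ j)]
  have hT : ∑ k ∈ Finset.univ.erase j, (a j / ∑ m, a m) • (∑ l, F2 n l k)
      = (a j / ∑ m, a m) • (∑ m, F2 n j m) := by
    rw [← Finset.smul_sum]
    congr 1
    rw [Finset.sum_erase_eq_sub (Finset.mem_univ j), double_sum_zero]
    have : (∑ l, F2 n l j) = -(∑ l, F2 n j l) := by
      rw [← Finset.sum_neg_distrib]; exact Finset.sum_congr rfl fun l _ => F2_swap j l
    rw [this]; simp
  rw [h1, h2, hT]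
  match_scalars
  field_simp
  ring

lemma dd2_swap (b : Fin n → Fin 2 → ℂ) (i j : Fin n) : dd2 b j i = -dd2 b i j := by
  simp [dd2]; ring

lemma ff2_swap (b : Fin n → Fin 2 → ℂ) (z : Fin n → ℂ) (i j k : Fin n) :
    ff2 b z i k j = -ff2 b z i j k := by
  simp [ff2, dd2]; ring


/-- For `z` with all `f_{i,j,k}(z) ≠ 0`:
`K_i(z) v_{j,k} = (d_{j,k}/f_{i,j,k}(z))(a_i v_{j,k} + a_j v_{k,i} + a_k v_{i,j})` for
`i ∉ {j,k}`, and `K_i(z) v_{j,i} = −∑_{k ∉ {i,j}} K_i(z) v_{j,k}`. -/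
theorem stmt_11 (n : ℕ) (hn : 3 ≤ n) (b : Fin n → Fin 2 → ℂ)
    (hd : ∀ i j : Fin n, i ≠ j → dd2 b i j ≠ 0)
    (a : Fin n → ℂ) (ha : ∀ j, a j ≠ 0) (hA : (∑ j, a j) ≠ 0)
    (z : Fin n → ℂ)
    (hz : ∀ i j k : Fin n, i ≠ j → i ≠ k → j ≠ k → ff2 b z i j k ≠ 0) :
    (∀ i j k : Fin n, i ≠ j → i ≠ k → j ≠ k →
      K2 a b z i (vv2 a j k) = (dd2 b j k / ff2 b z i j k) •
        (a i • vv2 a j k + a j • vv2 a k i + a k • vv2 a i j)) ∧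
    (∀ i j : Fin n, i ≠ j →
      K2 a b z i (vv2 a j i) =
        -∑ k ∈ Finset.univ.filter (fun k => k ≠ i ∧ k ≠ j), K2 a b z i (vv2 a j k)) := by
  
  constructor
  · intro i j k hij hik hjk
    rw [vv2_ident a hA hij hik hjk]
    simp only [K2, LinearMap.sum_apply, LinearMap.smul_apply,
      L2_vv2 a hij hik hjk]
    rcases lt_or_gt_of_ne hjk with hlt | hlt
    · -- j < k : the unique surviving pair is (j,k)
      rw [Finset.sum_eq_single j]
      · rw [Finset.sum_eq_single k]
        · rw [if_pos ⟨rfl, rfl⟩, if_neg (fun h => hjk h.1)]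
          norm_num
        · intro k' hk' hkk'
          rw [Finset.mem_filter] at hk'
          rw [if_neg (fun h => hkk' h.2), if_neg (fun h => hjk h.1)]
          norm_num
        · intro h
          exact absurd (Finset.mem_filter.mpr ⟨Finset.mem_univ k, hlt, hik.symm⟩) h
      · intro j' hj' hj'j
        apply Finset.sum_eq_zero
        intro k' hk'
        rw [Finset.mem_filter] at hk'
        have h2 : ¬(j' = k ∧ k' = j) := by
          rintro ⟨rfl, rfl⟩
          exact absurd hk'.2.1 (not_lt.mpr hlt.le)
        rw [if_neg (fun h => hj'j h.1), if_neg h2]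
        norm_num
      · intro h
        exact absurd (Finset.mem_erase.mpr ⟨hij.symm, Finset.mem_univ j⟩) h
    · -- k < j : the unique surviving pair is (k,j)
      rw [Finset.sum_eq_single k]
      · rw [Finset.sum_eq_single j]
        · rw [if_neg (fun h => hjk h.1.symm), if_pos ⟨rfl, rfl⟩]
          rw [dd2_swap, ff2_swap, neg_div_neg_eq]
          rw [F2_swap k i, F2_swap j k, F2_swap i j]
          congr 1
          module
        · intro k' hk' hkj
          rw [Finset.mem_filter] at hk'
          rw [if_neg (fun h => hjk h.1.symm), if_neg (fun h => hkj h.2)]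
          norm_num
        · intro h
          exact absurd (Finset.mem_filter.mpr ⟨Finset.mem_univ j, hlt, hij.symm⟩) h
      · intro j' hj' hj'k
        apply Finset.sum_eq_zero
        intro k' hk'
        rw [Finset.mem_filter] at hk'
        have h1 : ¬(j' = j ∧ k' = k) := by
          rintro ⟨rfl, rfl⟩
          exact absurd hk'.2.1 (not_lt.mpr hlt.le)
        rw [if_neg h1, if_neg (fun h => hj'k h.1)]
        norm_num
      · intro h
        exact absurd (Finset.mem_erase.mpr ⟨hik.symm, Finset.mem_univ k⟩) h
  · intro i j hij
    have hjj : vv2 a j j = 0 := by simp [vv2]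
    have hset : Finset.univ.erase j =
        insert i (Finset.univ.filter fun k => k ≠ i ∧ k ≠ j) := by
      ext m
      simp only [Finset.mem_erase, Finset.mem_insert, Finset.mem_filter, Finset.mem_univ,
        true_and, and_true]
      constructor
      · intro hm
        by_cases h : m = i
        · exact Or.inl h
        · exact Or.inr ⟨h, hm⟩
      · rintro (rfl | ⟨_, hm⟩)
        · exact hij
        · exact hm
    have hnotmem : i ∉ Finset.univ.filter fun k => k ≠ i ∧ k ≠ j := by
      simp
    have h0 := vv2_sum a hA j
    rw [← Finset.sum_erase Finset.univ hjj, hset, Finset.sum_insert hnotmem] at h0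
    have hv : vv2 a j i =
        -∑ k ∈ Finset.univ.filter (fun k => k ≠ i ∧ k ≠ j), vv2 a j k := by
      linear_combination (norm := module) h0
    rw [hv, map_neg, map_sum]
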